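/- Let δ > 0 and let Z ∈ ℝ^{N×r} have rank r, with compact singular value decomposition Z = UΛV, where U ∈ ℝ^{N×r} satisfies UᵀU = I_r, Λ ∈ ℝ^{r×r} is diagonal with strictly positive diagonal entries, and V ∈ ℝ^{r×r} is orthogonal. Define F_δ on full-rank matrices in ℝ^{N×r} by F_δ(Z) = Σ_{n=1}^N [H_δ(‖(Z(ZᵀZ)^{-1/2})[n]‖₂) + δ/2], where (Z(ZᵀZ)^{-1/2})[n] is the n-th row of the orthogonal factor. Then F_δ is Fréchet differentiable at Z and its Euclidean gradient is ∇F_δ(Z) = (I_N − UUᵀ) D_δ(UV) U Λ⁻¹ V; that is, the Fréchet derivative of F_δ at Z in direction E ∈ ℝ^{N×r} equals trace(((I_N − UUᵀ) D_δ(UV) U Λ⁻¹ V) Eᵀ). -/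

import Mathlib

open Matrix

noncomputable section

attribute [local instance] Matrix.normedAddCommGroup Matrix.normedSpace

/-- The Euclidean norm of the `i`-th row of a matrix. -/
def rowNorm {N r : ℕ} (X : Matrix (Fin N) (Fin r) ℝ) (i : Fin N) : ℝ :=
  Real.sqrt (∑ j, (X i j) ^ 2)

/-- The Huber function `H_δ`. -/
def huber (δ x : ℝ) : ℝ := if δ ≤ x then x - δ / 2 else x ^ 2 / (2 * δ)

/-- The derivative `H'_δ` of the Huber function. -/
def huberDeriv (δ x : ℝ) : ℝ := if δ ≤ x then 1 else x / δ

open Classical in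
/-- The diagonal matrix `D_δ(M)` with entries `H'_δ(‖M[i,:]‖₂)/‖M[i,:]‖₂` on nonzero
rows and `0` on zero rows. -/
def Ddelta (δ : ℝ) {N r : ℕ} (M : Matrix (Fin N) (Fin r) ℝ) : Matrix (Fin N) (Fin N) ℝ :=
  Matrix.diagonal fun i => if M i = 0 then 0 else huberDeriv δ (rowNorm M i) / rowNorm M i

open scoped ComplexOrder in
/-- The square root of a positive semidefinite matrix, as defined in the older Mathlib
(`Matrix.PosSemidef.sqrt`, since removed). -/
def Matrix.PosSemidef.sqrt {n 𝕜 : Type*} [Fintype n] [RCLike 𝕜] [DecidableEq n]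
    {A : Matrix n n 𝕜} (hA : A.PosSemidef) : Matrix n n 𝕜 :=
  hA.1.eigenvectorUnitary.1 * diagonal ((↑) ∘ (√·) ∘ hA.1.eigenvalues) *
    (star hA.1.eigenvectorUnitary : Matrix n n 𝕜)

/-- The orthogonal factor `Z (ZᵀZ)^{-1/2}` of `Z`, where `(ZᵀZ)^{-1/2}` is the inverse of
the (unique) symmetric positive-semidefinite square root of `ZᵀZ`; for `Z` of full column
rank this square root is the unique symmetric positive-definite one. -/
def orthFactor {N r : ℕ} (Z : Matrix (Fin N) (Fin r) ℝ) : Matrix (Fin N) (Fin r) ℝ :=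
  Z * (Matrix.PosSemidef.sqrt (Matrix.posSemidef_conjTranspose_mul_self Z))⁻¹

/-- The Huber-regularized functional
`F_δ(Z) = Σ_n [H_δ(‖(Z(ZᵀZ)^{-1/2})[n]‖₂) + δ/2]`. -/
def Fdelta (δ : ℝ) {N r : ℕ} (Z : Matrix (Fin N) (Fin r) ℝ) : ℝ :=
  ∑ n, (huber δ (rowNorm (orthFactor Z) n) + δ / 2)

open Asymptotics Filter

open scoped ComplexOrder in
theorem Matrix.PosSemidef.sqrt_mul_self' {n 𝕜 : Type*} [Fintype n] [RCLike 𝕜] [DecidableEq n]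
    {A : Matrix n n 𝕜} (hA : A.PosSemidef) : hA.sqrt * hA.sqrt = A := by
  have hs := hA.1.spectral_theorem
  have hu : (star hA.1.eigenvectorUnitary : Matrix n n 𝕜) * hA.1.eigenvectorUnitary.1 = 1 :=
    Unitary.coe_star_mul_self _
  unfold Matrix.PosSemidef.sqrt
  conv_rhs => rw [hs]
  rw [Unitary.conjStarAlgAut_apply]
  have hd : diagonal ((↑) ∘ (√·) ∘ hA.1.eigenvalues) * diagonal ((↑) ∘ (√·) ∘ hA.1.eigenvalues)
      = diagonal (RCLike.ofReal ∘ hA.1.eigenvalues : n → 𝕜) := by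
    rw [diagonal_mul_diagonal]
    congr 1; funext i
    simp only [Function.comp_apply]
    rw [← RCLike.ofReal_mul, Real.mul_self_sqrt (hA.eigenvalues_nonneg i)]
  calc _ = hA.1.eigenvectorUnitary.1 * (diagonal ((↑) ∘ (√·) ∘ hA.1.eigenvalues) *
      ((star hA.1.eigenvectorUnitary : Matrix n n 𝕜) * hA.1.eigenvectorUnitary.1) *
      diagonal ((↑) ∘ (√·) ∘ hA.1.eigenvalues)) * (star hA.1.eigenvectorUnitary : Matrix n n 𝕜) := by
        simp only [Matrix.mul_assoc]
    _ = _ := by rw [hu, Matrix.mul_one, hd]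

open scoped ComplexOrder in
theorem Matrix.PosSemidef.sqrt_isHermitian' {n 𝕜 : Type*} [Fintype n] [RCLike 𝕜] [DecidableEq n]
    {A : Matrix n n 𝕜} (hA : A.PosSemidef) : hA.sqrt.IsHermitian := by
  unfold Matrix.PosSemidef.sqrt Matrix.IsHermitian
  rw [conjTranspose_mul, conjTranspose_mul, diagonal_conjTranspose, Matrix.mul_assoc]
  congr 2
  · simp [Matrix.star_eq_conjTranspose]
  · congr 1; funext i; simp


abbrev Mat (m n : ℕ) := Matrix (Fin m) (Fin n) ℝ
def psi (δ t : ℝ) : ℝ := if δ^2 ≤ t then Real.sqrt t else t/(2*δ) + δ/2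

def psid (δ t : ℝ) : ℝ := if δ^2 ≤ t then 1/(2*Real.sqrt t) else 1/(2*δ)

theorem hasDerivAt_psi {δ : ℝ} (hδ : 0 < δ) (t : ℝ) : HasDerivAt (psi δ) (psid δ t) t := by
  have hδ2 : (0:ℝ) < δ^2 := by positivity
  rcases lt_trichotomy t (δ^2) with ht | ht | ht
  · -- t < δ², locally linear
    have hev : psi δ =ᶠ[nhds t] fun s => s/(2*δ) + δ/2 := by
      filter_upwards [eventually_lt_nhds ht] with s hs
      simp [psi, not_le.2 hs]
    rw [psid, if_neg (not_le.2 ht)]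
    refine HasDerivAt.congr_of_eventuallyEq ?_ hev
    simpa using ((hasDerivAt_id t).div_const (2*δ)).add_const (δ/2)
  · -- junction
    subst ht
    rw [psid, if_pos le_rfl, Real.sqrt_sq hδ.le]
    rw [hasDerivAt_iff_isLittleO]
    have hbig : (fun s => psi δ s - psi δ (δ^2) - (s - δ^2) • (1/(2*δ)))
        =O[nhds (δ^2)] fun s => ‖s - δ^2‖ ^ 2 := by
      rw [isBigO_iff]
      refine ⟨δ⁻¹^3, Eventually.of_forall fun s => ?_⟩
      have hpsid : psi δ (δ^2) = δ := by rw [psi, if_pos le_rfl, Real.sqrt_sq hδ.le]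
      by_cases hs : δ^2 ≤ s
      · have hu2 : Real.sqrt s ^ 2 = s := Real.sq_sqrt (hδ2.le.trans hs)
        have hu1 : δ ≤ Real.sqrt s := by
          rw [Real.le_sqrt hδ.le (hδ2.le.trans hs)]; exact hs
        rw [psi, if_pos hs, hpsid]
        set u := Real.sqrt s
        have key : u - δ - (s - δ^2) • (1/(2*δ)) = -((u - δ)^2/(2*δ)) := by
          rw [smul_eq_mul, ← hu2]; field_simp; ring
        rw [key, norm_neg]
        simp only [Real.norm_eq_abs, abs_abs, abs_pow, sq_abs, abs_div,
          abs_of_nonneg (sq_nonneg (u - δ)), abs_of_nonneg (by positivity : (0:ℝ) ≤ 2*δ)]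
        rw [div_le_iff₀ (by positivity)]
        have h1 : u - δ ≤ (s - δ^2)/δ := by
          rw [le_div_iff₀ hδ]
          nlinarith [hu1, hu2]
        have h2 : (u - δ) * δ ≤ s - δ^2 := by
          calc (u-δ)*δ ≤ ((s - δ^2)/δ)*δ := mul_le_mul_of_nonneg_right h1 hδ.le
          _ = s - δ^2 := div_mul_cancel₀ _ (ne_of_gt hδ)
        have h3 : ((u - δ)*δ)^2 ≤ (s - δ^2)^2 := by
          have h0 : (0:ℝ) ≤ (u-δ)*δ := mul_nonneg (sub_nonneg.2 hu1) hδ.le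
          exact pow_le_pow_left₀ h0 h2 2
        have h4 : (u-δ)^2 ≤ (s - δ^2)^2/δ^2 := by
          rw [le_div_iff₀ (by positivity)]
          calc (u-δ)^2*δ^2 = ((u-δ)*δ)^2 := by ring
          _ ≤ _ := h3
        calc (u-δ)^2 ≤ (s - δ^2)^2/δ^2 := h4
        _ ≤ δ⁻¹^3 * (s - δ^2)^2 * (2*δ) := by
            rw [show δ⁻¹^3 * (s - δ^2)^2 * (2*δ) = 2*((s - δ^2)^2/δ^2) from by field_simp]
            nlinarith [sq_nonneg (s - δ^2), sq_nonneg δ, div_nonneg (sq_nonneg (s-δ^2)) (sq_nonneg δ)]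
      · rw [psi, if_neg hs, hpsid, smul_eq_mul]
        have : s / (2*δ) + δ/2 - δ - (s - δ^2) * (1/(2*δ)) = 0 := by field_simp; ring
        rw [this, norm_zero]
        positivity
    refine hbig.trans_isLittleO ?_
    simpa using isLittleO_pow_sub_sub (δ^2 : ℝ) (m := 2) one_lt_two
  · -- t > δ², locally sqrt
    have hev : psi δ =ᶠ[nhds t] Real.sqrt := by
      filter_upwards [eventually_gt_nhds ht] with s hs
      simp [psi, hs.le]
    rw [psid, if_pos ht.le]
    refine HasDerivAt.congr_of_eventuallyEq ?_ hev
    exact Real.hasDerivAt_sqrt (ne_of_gt (hδ2.trans ht))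

def mulLM (a b c : ℕ) : Mat a b →ₗ[ℝ] Mat b c →ₗ[ℝ] Mat a c :=
  LinearMap.mk₂ ℝ (· * ·) Matrix.add_mul (fun c A B => Matrix.smul_mul c A B)
    Matrix.mul_add (fun c A B => Matrix.mul_smul A c B)

def mulCLM {a b c : ℕ} : Mat a b →L[ℝ] Mat b c →L[ℝ] Mat a c :=
  LinearMap.toContinuousLinearMap
    ((LinearMap.toContinuousLinearMap :
        (Mat b c →ₗ[ℝ] Mat a c) ≃ₗ[ℝ] (Mat b c →L[ℝ] Mat a c)).toLinearMap.comp (mulLM a b c))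

@[simp] lemma mulCLM_apply {a b c : ℕ} (X : Mat a b) (Y : Mat b c) : mulCLM X Y = X * Y := rfl

def mulCLM.flip {a b c : ℕ} : Mat b c →L[ℝ] Mat a b →L[ℝ] Mat a c :=
  ContinuousLinearMap.flip mulCLM

@[simp] lemma mulCLM.flip_apply' {a b c : ℕ} (X : Mat a b) (Y : Mat b c) :
    mulCLM.flip Y X = X * Y := rfl

theorem HasFDerivAt.matmul {a b c : ℕ} {X : Type*} [NormedAddCommGroup X] [NormedSpace ℝ X]
    {f : X → Mat a b} {g : X → Mat b c} {f' : X →L[ℝ] Mat a b} {g' : X →L[ℝ] Mat b c} {x : X}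
    (hf : HasFDerivAt f f' x) (hg : HasFDerivAt g g' x) :
    HasFDerivAt (fun y => f y * g y)
      ((mulCLM (f x)).comp g' + (mulCLM.flip (g x)).comp f') x := by
  have h := (mulCLM (a := a) (b := b) (c := c)).isBoundedBilinearMap
  have h2 := (h.hasFDerivAt (f x, g x)).comp x (hf.prodMk hg)
  have e : ((mulCLM (f x)).comp g' + (mulCLM.flip (g x)).comp f' : X →L[ℝ] Mat a c)
      = h.deriv (f x, g x) ∘L f'.prod g' := by
    ext1 v
    show _ = h.deriv (f x, g x) (f'.prod g' v)
    rw [IsBoundedBilinearMap.deriv_apply]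
    rfl
  rw [e]; exact h2

def transCLM (a b : ℕ) : Mat a b →L[ℝ] Mat b a :=
  LinearMap.toContinuousLinearMap (Matrix.transposeLinearEquiv (Fin a) (Fin b) ℝ ℝ).toLinearMap

@[simp] lemma transCLM_apply {a b : ℕ} (X : Mat a b) : transCLM a b X = Xᵀ := rfl

def entryCLM {a b : ℕ} (i : Fin a) (j : Fin b) : Mat a b →L[ℝ] ℝ :=
  LinearMap.toContinuousLinearMap
    { toFun := fun M => M i j
      map_add' := fun _ _ => rfl
      map_smul' := fun _ _ => rfl }

@[simp] lemma entryCLM_apply {a b : ℕ} (i : Fin a) (j : Fin b) (X : Mat a b) :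
    entryCLM i j X = X i j := rfl

theorem differentiableAt_entries {a b : ℕ} {X : Type*} [NormedAddCommGroup X] [NormedSpace ℝ X]
    {F : X → Mat a b} {x : X} (h : ∀ i j, DifferentiableAt ℝ (fun y => F y i j) x) :
    DifferentiableAt ℝ F x := by
  have hF : F = fun y => ∑ i, ∑ j, F y i j • Matrix.single i j (1:ℝ) := by
    funext y
    conv_lhs => rw [Matrix.matrix_eq_sum_single (F y)]
    congr 1; funext i; congr 1; funext j
    rw [Matrix.smul_single, smul_eq_mul, mul_one]
  rw [hF]
  exact DifferentiableAt.fun_sum fun i _ => DifferentiableAt.fun_sum fun j _ =>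
    (h i j).smul_const _

theorem differentiable_det {n : ℕ} : Differentiable ℝ (fun B : Mat n n => B.det) := by
  intro B
  have h : (fun B : Mat n n => B.det)
      = fun B => ∑ σ : Equiv.Perm (Fin n), ((Equiv.Perm.sign σ : ℤ) : ℝ) * ∏ i, B (σ i) i := by
    funext B; rw [Matrix.det_apply']
  rw [h]
  refine DifferentiableAt.fun_sum fun σ _ => DifferentiableAt.const_mul ?_ _
  exact (HasFDerivAt.finset_prod (u := Finset.univ)
    (g := fun i (B : Mat n n) => B (σ i) i) (g' := fun i => entryCLM (σ i) i)
    (fun i _ => (entryCLM (σ i) i).hasFDerivAt)).differentiableAt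

def zeroRowLM {n : ℕ} (j : Fin n) : Mat n n →ₗ[ℝ] Mat n n where
  toFun B := Matrix.of fun k l => if k = j then 0 else B k l
  map_add' B C := by ext k l; by_cases h : k = j <;> simp [h]
  map_smul' c B := by ext k l; by_cases h : k = j <;> simp [h]

theorem differentiable_updateRow_det {n : ℕ} (j : Fin n) (v : Fin n → ℝ) :
    Differentiable ℝ (fun B : Mat n n => (B.updateRow j v).det) := by
  have key : (fun B : Mat n n => B.updateRow j v)
      = fun B => (zeroRowLM j).toContinuousLinearMap B + (0 : Mat n n).updateRow j v := by
    funext B; ext k l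
    by_cases h : k = j <;> simp [Matrix.updateRow_apply, h, zeroRowLM]
  intro B
  have h1 : DifferentiableAt ℝ (fun C : Mat n n => C.updateRow j v) B := by
    rw [key]
    exact ((LinearMap.toContinuousLinearMap (zeroRowLM j)).differentiable.add_const _) B
  exact DifferentiableAt.comp B (differentiable_det _) h1

theorem differentiable_adjugate {n : ℕ} : Differentiable ℝ (fun B : Mat n n => B.adjugate) := by
  intro B
  refine differentiableAt_entries fun i j => ?_
  have : (fun y : Mat n n => y.adjugate i j) = fun y => (y.updateRow j (Pi.single i 1)).det := by
    funext y; rw [Matrix.adjugate_apply]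
  rw [this]
  exact differentiable_updateRow_det j _ B

theorem matInvDifferentiableAt {n : ℕ} {A : Mat n n} (hA : IsUnit A.det) :
    DifferentiableAt ℝ (fun B : Mat n n => B⁻¹) A := by
  have : (fun B : Mat n n => B⁻¹) = fun B => (B.det)⁻¹ • B.adjugate := by
    funext B; rw [Matrix.inv_def, Ring.inverse_eq_inv']
  rw [this]
  exact ((differentiable_det A).inv (by
    simpa [isUnit_iff_ne_zero] using hA)).smul (differentiable_adjugate A)

def invDerivCLM {n : ℕ} (A : Mat n n) : Mat n n →L[ℝ] Mat n n :=
  -((mulCLM.flip A⁻¹).comp (mulCLM A⁻¹))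

@[simp] lemma invDerivCLM_apply {n : ℕ} (A E : Mat n n) :
    invDerivCLM A E = -(A⁻¹ * E * A⁻¹) := rfl

theorem matInvHasFDerivAt {n : ℕ} {A : Mat n n} (hA : IsUnit A.det) :
    HasFDerivAt (fun B : Mat n n => B⁻¹) (invDerivCLM A) A := by
  have hdiff := matInvDifferentiableAt hA
  have hF := hdiff.hasFDerivAt
  set D₀ := fderiv ℝ (fun B : Mat n n => B⁻¹) A with hD₀
  -- eventually invertible
  have hopen : ∀ᶠ B in nhds A, IsUnit (B : Mat n n).det := by
    have hcont : Continuous fun B : Mat n n => B.det := differentiable_det.continuous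
    have : {B : Mat n n | B.det ≠ 0} ∈ nhds A := by
      refine (isOpen_compl_iff.2 (isClosed_singleton.preimage hcont)).mem_nhds ?_
      simpa [isUnit_iff_ne_zero] using hA
    filter_upwards [this] with B hB
    simpa [isUnit_iff_ne_zero] using hB
  have hprod : HasFDerivAt (fun B : Mat n n => B⁻¹ * B)
      ((mulCLM A⁻¹).comp (ContinuousLinearMap.id ℝ (Mat n n)) + (mulCLM.flip A).comp D₀) A :=
    HasFDerivAt.matmul hF (hasFDerivAt_id A)
  have hone : HasFDerivAt (fun _ : Mat n n => (1 : Mat n n)) (0 : Mat n n →L[ℝ] Mat n n) A := hasFDerivAt_const (1 : Mat n n) A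
  have heq : (fun B : Mat n n => B⁻¹ * B) =ᶠ[nhds A] fun _ => (1 : Mat n n) := by
    filter_upwards [hopen] with B hB
    exact Matrix.nonsing_inv_mul B hB
  have hzero : HasFDerivAt (fun B : Mat n n => B⁻¹ * B) (0 : Mat n n →L[ℝ] Mat n n) A := hone.congr_of_eventuallyEq heq
  have huniq := hprod.unique hzero
  have hkey : ∀ E, A⁻¹ * E + D₀ E * A = 0 := fun E => by
    have := congrArg (fun (L : Mat n n →L[ℝ] Mat n n) => L E) huniq
    simpa using this
  have hDval : ∀ E, D₀ E = -(A⁻¹ * E * A⁻¹) := fun E => by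
    have h := hkey E
    have h2 : D₀ E * A * A⁻¹ = -(A⁻¹ * E) * A⁻¹ := by
      rw [show D₀ E * A = -(A⁻¹ * E) from by linear_combination (norm := noncomm_ring) h]
    rwa [Matrix.mul_assoc, Matrix.mul_nonsing_inv A hA, Matrix.mul_one, Matrix.neg_mul] at h2
  have : invDerivCLM A = D₀ := by
    ext1 E; rw [invDerivCLM_apply, hDval E]
  rw [this]
  exact hF

theorem Fdelta_eq {N r : ℕ} {δ : ℝ} (hδ : 0 < δ) (Z' : Mat N r) :
    Fdelta δ Z' = ∑ n, psi δ ((Z' * (Z'ᵀ * Z')⁻¹ * Z'ᵀ) n n) := by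
  unfold Fdelta
  refine Finset.sum_congr rfl fun n _ => ?_
  set S := Matrix.PosSemidef.sqrt (Matrix.posSemidef_conjTranspose_mul_self Z') with hSdef
  have hCT : Z'ᴴ = Z'ᵀ := Matrix.conjTranspose_eq_transpose_of_trivial Z'
  have hSS : S * S = Z'ᵀ * Z' := by
    rw [hSdef, Matrix.PosSemidef.sqrt_mul_self', hCT]
  have hδ2 : ¬ (δ^2 ≤ (0:ℝ)) := not_le.2 (by positivity)
  by_cases h : IsUnit (Z'ᵀ * Z').det
  · have hST : Sᵀ = S := by
      have h2 := Matrix.PosSemidef.sqrt_isHermitian' (Matrix.posSemidef_conjTranspose_mul_self Z')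
      rwa [Matrix.IsHermitian, Matrix.conjTranspose_eq_transpose_of_trivial] at h2
    have hQQ : orthFactor Z' * (orthFactor Z')ᵀ = Z' * (Z'ᵀ * Z')⁻¹ * Z'ᵀ := by
      rw [orthFactor, ← hSS, Matrix.mul_inv_rev, Matrix.transpose_mul,
        Matrix.transpose_nonsing_inv, hST]
      simp only [Matrix.mul_assoc, ← hSdef]
    have hl : (Z' * (Z'ᵀ * Z')⁻¹ * Z'ᵀ) n n = ∑ j, (orthFactor Z' n j)^2 := by
      rw [← hQQ]
      simp [Matrix.mul_apply, Matrix.transpose_apply, sq]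
    have hlnn : (0:ℝ) ≤ (Z' * (Z'ᵀ * Z')⁻¹ * Z'ᵀ) n n := by
      rw [hl]; positivity
    have hrn : rowNorm (orthFactor Z') n = Real.sqrt ((Z' * (Z'ᵀ * Z')⁻¹ * Z'ᵀ) n n) := by
      rw [rowNorm, hl]
    rw [hrn]
    by_cases hcase : δ^2 ≤ (Z' * (Z'ᵀ * Z')⁻¹ * Z'ᵀ) n n
    · rw [huber, if_pos ((Real.le_sqrt hδ.le hlnn).2 hcase), psi, if_pos hcase]
      ring
    · rw [huber, if_neg (fun hc => hcase ((Real.le_sqrt hδ.le hlnn).1 hc)), psi,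
        if_neg hcase, Real.sq_sqrt hlnn]
  · have hA0 : (Z'ᵀ * Z')⁻¹ = 0 := Matrix.nonsing_inv_apply_not_isUnit _ h
    have hS0 : S⁻¹ = 0 := by
      apply Matrix.nonsing_inv_apply_not_isUnit
      intro hu
      exact h (by rw [← hSS, Matrix.det_mul]; exact hu.mul hu)
    have hQ0 : orthFactor Z' = 0 := by
      rw [orthFactor, ← hSdef, hS0, Matrix.mul_zero]
    rw [hQ0, hA0, rowNorm]
    simp only [Matrix.mul_zero, Matrix.zero_mul, Matrix.zero_apply]
    rw [huber, psi, if_neg hδ2]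
    simp [hδ.not_ge, Real.sqrt_zero]

theorem sum_diag_mul {N' : ℕ} (c : Fin N' → ℝ) (M : Mat N' N') :
    ∑ n, c n * M n n = (Matrix.diagonal c * M).trace := by
  rw [Matrix.trace]
  refine Finset.sum_congr rfl fun n _ => ?_
  rw [Matrix.diag_apply, Matrix.diagonal_mul]

/-- `F_δ` is Fréchet differentiable at any full-rank `Z` with compact SVD `Z = U Λ V`,
with Euclidean gradient `(I_N − UUᵀ) D_δ(UV) U Λ⁻¹ V`: the Fréchet derivative in
direction `E` is `trace((I_N − UUᵀ) D_δ(UV) U Λ⁻¹ V Eᵀ)`. -/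
theorem statement_18 {N r : ℕ} (δ : ℝ) (hδ : 0 < δ)
    (Z : Matrix (Fin N) (Fin r) ℝ) (hrank : Z.rank = r)
    (U : Matrix (Fin N) (Fin r) ℝ) (Λ V : Matrix (Fin r) (Fin r) ℝ)
    (hU : Uᵀ * U = 1)
    (hΛdiag : ∀ i j, i ≠ j → Λ i j = 0) (hΛpos : ∀ i, 0 < Λ i i)
    (hV : Vᵀ * V = 1) (hSVD : Z = U * Λ * V) :
    ∃ L : Matrix (Fin N) (Fin r) ℝ →L[ℝ] ℝ,
      (∀ E : Matrix (Fin N) (Fin r) ℝ,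
        L E = ((1 - U * Uᵀ) * Ddelta δ (U * V) * U * Λ⁻¹ * V * Eᵀ).trace) ∧
      HasFDerivAt (Fdelta δ) L Z := by
  classical
  -- basic facts about Λ, V
  have hΛ : Λ = Matrix.diagonal fun i => Λ i i := by
    ext i j
    by_cases h : i = j
    · subst h; simp [Matrix.diagonal_apply_eq]
    · simp [Matrix.diagonal_apply_ne _ h, hΛdiag i j h]
  have hΛdet : IsUnit Λ.det := by
    rw [hΛ, Matrix.det_diagonal, isUnit_iff_ne_zero]
    exact ne_of_gt (Finset.prod_pos fun i _ => hΛpos i)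
  have hΛT : Λᵀ = Λ := by conv_lhs => rw [hΛ, Matrix.diagonal_transpose, ← hΛ]
  have hΛinv : Λ * Λ⁻¹ = 1 := Matrix.mul_nonsing_inv _ hΛdet
  have hΛinv' : Λ⁻¹ * Λ = 1 := Matrix.nonsing_inv_mul _ hΛdet
  have hVV : V * Vᵀ = 1 := mul_eq_one_comm.1 hV
  have hVdet : IsUnit V.det := by
    rw [isUnit_iff_ne_zero]
    intro h0
    have := congrArg Matrix.det hV
    rw [Matrix.det_mul, Matrix.det_transpose, h0, mul_zero, Matrix.det_one] at this
    exact zero_ne_one this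
  -- the Gram matrix
  have hWform : Zᵀ * Z = Vᵀ * (Λ * (Λ * V)) := by
    rw [hSVD]
    simp only [Matrix.transpose_mul, hΛT, Matrix.mul_assoc]
    rw [← Matrix.mul_assoc Uᵀ U, hU, Matrix.one_mul]
  have hdet : IsUnit (Zᵀ * Z).det := by
    rw [hWform]
    simp only [Matrix.det_mul, Matrix.det_transpose]
    exact (hVdet.mul (hΛdet.mul (hΛdet.mul hVdet)))
  have hAform : (Zᵀ * Z)⁻¹ = Vᵀ * (Λ⁻¹ * (Λ⁻¹ * V)) := by
    apply Matrix.inv_eq_right_inv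
    rw [hWform]
    simp only [Matrix.mul_assoc]
    rw [← Matrix.mul_assoc V Vᵀ, hVV, Matrix.one_mul,
      ← Matrix.mul_assoc Λ Λ⁻¹ (Λ⁻¹ * V), hΛinv, Matrix.one_mul,
      ← Matrix.mul_assoc Λ Λ⁻¹ V, hΛinv, Matrix.one_mul, hV]
  have hZA : Z * (Zᵀ * Z)⁻¹ = U * (Λ⁻¹ * V) := by
    rw [hAform, hSVD]
    simp only [Matrix.mul_assoc]
    rw [← Matrix.mul_assoc V Vᵀ, hVV, Matrix.one_mul,
      ← Matrix.mul_assoc Λ Λ⁻¹ (Λ⁻¹ * V), hΛinv, Matrix.one_mul]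
  have hZT : Zᵀ = Vᵀ * (Λ * Uᵀ) := by
    rw [hSVD]
    simp only [Matrix.transpose_mul, hΛT, Matrix.mul_assoc]
  have hP : Z * (Zᵀ * Z)⁻¹ * Zᵀ = U * Uᵀ := by
    rw [hZA, hZT]
    simp only [Matrix.mul_assoc]
    rw [← Matrix.mul_assoc V Vᵀ, hVV, Matrix.one_mul,
      ← Matrix.mul_assoc Λ⁻¹ Λ Uᵀ, hΛinv', Matrix.one_mul]
  have hAT : ((Zᵀ * Z)⁻¹)ᵀ = (Zᵀ * Z)⁻¹ := by
    rw [Matrix.transpose_nonsing_inv, Matrix.transpose_mul, Matrix.transpose_transpose]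
  -- derivative chain
  have htr : HasFDerivAt (fun Y : Mat N r => Yᵀ) (transCLM N r) Z :=
    (transCLM N r).hasFDerivAt
  have hWd : HasFDerivAt (fun Z' : Mat N r => Z'ᵀ * Z')
      ((mulCLM Zᵀ).comp (ContinuousLinearMap.id ℝ (Mat N r)) +
        (mulCLM.flip Z).comp (transCLM N r)) Z :=
    htr.matmul (hasFDerivAt_id Z)
  have hAd : HasFDerivAt (fun Z' : Mat N r => (Z'ᵀ * Z')⁻¹)
      ((invDerivCLM (Zᵀ * Z)).comp
        ((mulCLM Zᵀ).comp (ContinuousLinearMap.id ℝ (Mat N r)) +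
          (mulCLM.flip Z).comp (transCLM N r))) Z :=
    HasFDerivAt.comp (f := fun Z' : Mat N r => Z'ᵀ * Z') Z (matInvHasFDerivAt hdet) hWd
  have hZd1 : HasFDerivAt (fun Z' : Mat N r => Z' * (Z'ᵀ * Z')⁻¹)
      ((mulCLM Z).comp ((invDerivCLM (Zᵀ * Z)).comp
          ((mulCLM Zᵀ).comp (ContinuousLinearMap.id ℝ (Mat N r)) +
            (mulCLM.flip Z).comp (transCLM N r))) +
        (mulCLM.flip ((Zᵀ * Z)⁻¹)).comp (ContinuousLinearMap.id ℝ (Mat N r))) Z :=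
    (hasFDerivAt_id Z).matmul hAd
  have hGd : HasFDerivAt (fun Z' : Mat N r => Z' * (Z'ᵀ * Z')⁻¹ * Z'ᵀ)
      ((mulCLM (Z * (Zᵀ * Z)⁻¹)).comp (transCLM N r) +
        (mulCLM.flip Zᵀ).comp
          ((mulCLM Z).comp ((invDerivCLM (Zᵀ * Z)).comp
              ((mulCLM Zᵀ).comp (ContinuousLinearMap.id ℝ (Mat N r)) +
                (mulCLM.flip Z).comp (transCLM N r))) +
            (mulCLM.flip ((Zᵀ * Z)⁻¹)).comp (ContinuousLinearMap.id ℝ (Mat N r)))) Z :=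
    hZd1.matmul htr
  refine ⟨∑ n, psid δ ((Z * (Zᵀ * Z)⁻¹ * Zᵀ) n n) •
      ((entryCLM n n).comp
        ((mulCLM (Z * (Zᵀ * Z)⁻¹)).comp (transCLM N r) +
          (mulCLM.flip Zᵀ).comp
            ((mulCLM Z).comp ((invDerivCLM (Zᵀ * Z)).comp
                ((mulCLM Zᵀ).comp (ContinuousLinearMap.id ℝ (Mat N r)) +
                  (mulCLM.flip Z).comp (transCLM N r))) +
              (mulCLM.flip ((Zᵀ * Z)⁻¹)).comp (ContinuousLinearMap.id ℝ (Mat N r))))),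
    fun E => ?_, ?_⟩
  · -- value computation
    simp only [ContinuousLinearMap.sum_apply, ContinuousLinearMap.smul_apply,
      ContinuousLinearMap.comp_apply, ContinuousLinearMap.add_apply,
      ContinuousLinearMap.coe_id', id_eq, ContinuousLinearMap.flip_apply, mulCLM.flip_apply',
      mulCLM_apply, transCLM_apply, entryCLM_apply, invDerivCLM_apply, smul_eq_mul]
    set A := (Zᵀ * Z)⁻¹ with hAdef
    rw [sum_diag_mul (fun n => psid δ ((Z * A * Zᵀ) n n))
      (Z * A * Eᵀ + (Z * -(A * (Zᵀ * E + Eᵀ * Z) * A) + E * A) * Zᵀ)]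
    set D' := Matrix.diagonal (fun n => psid δ ((Z * A * Zᵀ) n n)) with hD'
    have hDT : D'ᵀ = D' := by rw [hD', Matrix.diagonal_transpose]
    -- the three trace identities
    have e1 : (D' * (E * (A * Zᵀ))).trace = (D' * (Z * (A * Eᵀ))).trace := by
      rw [← Matrix.trace_transpose (D' * (E * (A * Zᵀ)))]
      rw [show (D' * (E * (A * Zᵀ)))ᵀ = (Z * (A * Eᵀ)) * D' from by
        simp [Matrix.transpose_mul, hAT, hDT, Matrix.mul_assoc]]
      rw [Matrix.trace_mul_comm]
    have e2 : (D' * (Z * (A * (Zᵀ * (E * (A * Zᵀ)))))).trace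
        = (Z * (A * (Zᵀ * (D' * (Z * (A * Eᵀ)))))).trace := by
      rw [← Matrix.trace_transpose (D' * (Z * (A * (Zᵀ * (E * (A * Zᵀ))))))]
      rw [show (D' * (Z * (A * (Zᵀ * (E * (A * Zᵀ))))))ᵀ
          = (Z * (A * Eᵀ)) * (Z * (A * (Zᵀ * D'))) from by
        simp [Matrix.transpose_mul, hAT, hDT, Matrix.mul_assoc]]
      rw [Matrix.trace_mul_comm]
      rw [show (Z * (A * (Zᵀ * D'))) * (Z * (A * Eᵀ))
          = Z * (A * (Zᵀ * (D' * (Z * (A * Eᵀ))))) from by simp [Matrix.mul_assoc]]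
    have e3 : (D' * (Z * (A * (Eᵀ * (Z * (A * Zᵀ)))))).trace
        = (Z * (A * (Zᵀ * (D' * (Z * (A * Eᵀ)))))).trace := by
      rw [show D' * (Z * (A * (Eᵀ * (Z * (A * Zᵀ)))))
          = (D' * (Z * (A * Eᵀ))) * (Z * (A * Zᵀ)) from by simp [Matrix.mul_assoc]]
      rw [Matrix.trace_mul_comm]
      rw [show (Z * (A * Zᵀ)) * (D' * (Z * (A * Eᵀ)))
          = Z * (A * (Zᵀ * (D' * (Z * (A * Eᵀ))))) from by simp [Matrix.mul_assoc]]
    have hLHS : (D' * (Z * A * Eᵀ + (Z * -(A * (Zᵀ * E + Eᵀ * Z) * A) + E * A) * Zᵀ)).trace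
        = 2 * (D' * (Z * (A * Eᵀ))).trace
          - 2 * (Z * (A * (Zᵀ * (D' * (Z * (A * Eᵀ)))))).trace := by
      simp only [Matrix.mul_add, Matrix.add_mul, Matrix.mul_neg, Matrix.neg_mul,
        Matrix.mul_assoc, Matrix.trace_add, Matrix.trace_neg]
      rw [e1, e2, e3]
      ring
    -- entrywise facts
    have hUUd : ∀ k, (Z * A * Zᵀ) k k = ∑ j, (U k j)^2 := by
      intro k
      rw [hP]
      simp [Matrix.mul_apply, Matrix.transpose_apply, sq]
    have hUVrow : ∀ k, ∑ j, ((U * V) k j)^2 = ∑ j, (U k j)^2 := by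
      intro k
      have hUVUV : (U * V) * (U * V)ᵀ = U * Uᵀ := by
        rw [Matrix.transpose_mul]
        simp only [Matrix.mul_assoc]
        rw [← Matrix.mul_assoc V Vᵀ, hVV, Matrix.one_mul]
      have h1 := congrFun (congrFun hUVUV k) k
      simp only [Matrix.mul_apply, Matrix.transpose_apply] at h1
      calc ∑ j, ((U * V) k j)^2
          = ∑ x, (∑ j, U k j * V j x) * ∑ j, U k j * V j x :=
            Finset.sum_congr rfl fun x _ => by rw [sq, Matrix.mul_apply]
        _ = ∑ x, U k x * U k x := h1
        _ = ∑ j, (U k j)^2 := Finset.sum_congr rfl fun x _ => (sq (U k x)).symm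
    have hDU : Ddelta δ (U * V) * U = ((2:ℝ) • D') * U := by
      ext k j
      have hL : (Ddelta δ (U * V) * U) k j
          = (if (U * V) k = 0 then 0 else
              huberDeriv δ (rowNorm (U * V) k) / rowNorm (U * V) k) * U k j := by
        rw [Ddelta, Matrix.diagonal_mul]
      have hR : (((2:ℝ) • D') * U) k j = (2 * psid δ ((Z * A * Zᵀ) k k)) * U k j := by
        rw [Matrix.smul_mul, Matrix.smul_apply, hD', Matrix.diagonal_mul, smul_eq_mul]
        ring
      rw [hL, hR]
      by_cases hk : U k = 0
      · rw [show U k j = 0 from congrFun hk j]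
        ring
      · obtain ⟨j0, hj0⟩ : ∃ j0, U k j0 ≠ 0 := by
          by_contra hcon
          push_neg at hcon
          exact hk (funext hcon)
        have hpos : 0 < ∑ j, (U k j)^2 :=
          Finset.sum_pos' (fun i _ => sq_nonneg _)
            ⟨j0, Finset.mem_univ _, pow_two_pos_of_ne_zero hj0⟩
        have hUVk : ¬ ((U * V) k = 0) := by
          intro h0
          have hzero : ∑ j, ((U * V) k j)^2 = 0 :=
            Finset.sum_eq_zero fun i _ => by rw [congrFun h0 i]; simp
          rw [hUVrow k] at hzero
          exact hpos.ne' hzero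
        rw [if_neg hUVk]
        have hrw : rowNorm (U * V) k = Real.sqrt (∑ j, (U k j)^2) := by
          rw [rowNorm, hUVrow k]
        rw [hrw, hUUd k]
        congr 1
        have hsq : (0:ℝ) < Real.sqrt (∑ j, (U k j)^2) := Real.sqrt_pos.2 hpos
        by_cases hc : δ^2 ≤ ∑ j, (U k j)^2
        · rw [huberDeriv, if_pos ((Real.le_sqrt hδ.le hpos.le).2 hc), psid, if_pos hc]
          field_simp
        · rw [huberDeriv, if_neg (fun hcc => hc ((Real.le_sqrt hδ.le hpos.le).1 hcc)),
            psid, if_neg hc]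
          field_simp
    have hRHS : ((1 - U * Uᵀ) * Ddelta δ (U * V) * U * Λ⁻¹ * V * Eᵀ).trace
        = 2 * (D' * (Z * (A * Eᵀ))).trace
          - 2 * (Z * (A * (Zᵀ * (D' * (Z * (A * Eᵀ)))))).trace := by
      have h1 : (1 - U * Uᵀ) * Ddelta δ (U * V) * U * Λ⁻¹ * V * Eᵀ
          = (1 - U * Uᵀ) * ((Ddelta δ (U * V) * U) * (Λ⁻¹ * (V * Eᵀ))) := by
        simp only [Matrix.mul_assoc]
      have hZAE : Z * (A * Eᵀ) = U * (Λ⁻¹ * (V * Eᵀ)) := by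
        rw [← Matrix.mul_assoc, hZA]
        simp only [Matrix.mul_assoc]
      have h2 : ((2:ℝ) • D' * U) * (Λ⁻¹ * (V * Eᵀ)) = (2:ℝ) • (D' * (Z * (A * Eᵀ))) := by
        rw [Matrix.smul_mul, Matrix.smul_mul]
        congr 1
        rw [hZAE]
        simp only [Matrix.mul_assoc]
      rw [h1, hDU, h2]
      rw [Matrix.mul_smul, Matrix.trace_smul, Matrix.sub_mul, Matrix.one_mul,
        Matrix.trace_sub]
      rw [show U * Uᵀ * (D' * (Z * (A * Eᵀ)))
          = Z * (A * (Zᵀ * (D' * (Z * (A * Eᵀ))))) from by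
        rw [← hP]; simp only [Matrix.mul_assoc]]
      simp [smul_eq_mul]
      ring
    rw [hLHS, hRHS]
  · -- differentiability
    rw [show Fdelta δ = (fun Z' : Mat N r => ∑ n, psi δ ((Z' * (Z'ᵀ * Z')⁻¹ * Z'ᵀ) n n))
      from funext fun Z' => Fdelta_eq hδ Z']
    refine HasFDerivAt.fun_sum fun n _ => ?_
    exact (hasDerivAt_psi hδ _).comp_hasFDerivAt Z ((entryCLM n n).hasFDerivAt.comp Z hGd)
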